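/- Let p ≥ 17 be a prime and a, b, c pairwise coprime odd nonzero integers with a^p + 2b^p + c^p = 0. If every odd prime dividing abc is equal to 3, then two of |a|, |b|, |c| equal 1 and the third is a power of 3; moreover, this forces a = -b = c = ±1. -/
import Mathlib

theorem stmt_13 (p : ℕ) (hp : p.Prime) (hp17 : 17 ≤ p) (a b c : ℤ)
    (ha : a ≠ 0) (hb : b ≠ 0) (hc : c ≠ 0)
    (haodd : Odd a) (hbodd : Odd b) (hcodd : Odd c)
    (hab : IsCoprime a b) (hbc : IsCoprime b c) (hac : IsCoprime a c)
    (heq : a ^ p + 2 * b ^ p + c ^ p = 0)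
    (hdiv : ∀ q : ℕ, q.Prime → Odd q → (q : ℤ) ∣ a * b * c → q = 3) :
    ((|a| = 1 ∧ |b| = 1 ∧ ∃ n : ℕ, |c| = 3 ^ n) ∨
     (|a| = 1 ∧ |c| = 1 ∧ ∃ n : ℕ, |b| = 3 ^ n) ∨
     (|b| = 1 ∧ |c| = 1 ∧ ∃ n : ℕ, |a| = 3 ^ n)) ∧
    (a = -b ∧ -b = c ∧ (a = 1 ∨ a = -1)) := by
  have hpodd : Odd p := hp.odd_of_ne_two (by omega)
  -- every one of a, b, c is (up to sign) a power of 3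
  have pow3 : ∀ x : ℤ, x ≠ 0 → Odd x → x ∣ a * b * c → ∃ k, x.natAbs = 3 ^ k := by
    intro x hx hxodd hxdvd
    refine ⟨x.natAbs.primeFactorsList.length,
      Nat.eq_prime_pow_of_unique_prime_dvd (Int.natAbs_ne_zero.mpr hx) ?_⟩
    intro d hd hddvd
    have hdx : (d : ℤ) ∣ x := Int.natCast_dvd_natCast.mpr hddvd |>.trans (Int.natAbs_dvd.mpr dvd_rfl)
    rcases hd.eq_two_or_odd' with h2 | hodd
    · exfalso
      rw [h2] at hdx
      exact (Int.not_odd_iff_even.mpr (even_iff_two_dvd.mpr hdx)) hxodd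
    · exact hdiv d hd hodd (hdx.trans hxdvd)
  obtain ⟨ka, hka⟩ := pow3 a ha haodd (dvd_mul_of_dvd_left (dvd_mul_right a b) c)
  obtain ⟨kb, hkb⟩ := pow3 b hb hbodd (dvd_mul_of_dvd_left (dvd_mul_left b a) c)
  obtain ⟨kc, hkc⟩ := pow3 c hc hcodd (dvd_mul_left c (a * b))
  -- 3 does not divide two of them
  have h3 : ¬ IsUnit (3 : ℤ) := by decide
  have dvd3 : ∀ (x : ℤ) (k : ℕ), x.natAbs = 3 ^ k → 1 ≤ k → (3 : ℤ) ∣ x := by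
    intro x k hxk hk
    have : (3 : ℕ) ∣ x.natAbs := hxk ▸ dvd_pow_self 3 (by omega)
    exact_mod_cast (Int.natCast_dvd_natCast.mpr this).trans (Int.natAbs_dvd.mpr dvd_rfl)
  -- the ones with natAbs = 1
  have habs : ∀ x : ℤ, x.natAbs = 1 → x = 1 ∨ x = -1 := fun x hx => Int.natAbs_eq_iff.mp hx
  have hpowone : ∀ x : ℤ, x = 1 ∨ x = -1 → x ^ p = x := by
    rintro x (rfl | rfl)
    · simp
    · simp [hpodd.neg_one_pow]
  -- magnitude bound: each exponent is zero
  have hbig : ∀ k : ℕ, 1 ≤ k → 9 ≤ 3 ^ (k * p) := by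
    intro k hk
    calc (9:ℕ) = 3 ^ 2 := by norm_num
    _ ≤ 3 ^ (k * p) := Nat.pow_le_pow_right (by norm_num) (by nlinarith)
  have hka0 : ka = 0 := by
    by_contra h
    have hb3 : kb = 0 := by
      by_contra h'
      exact h3 (hab.isUnit_of_dvd' (dvd3 a ka hka (by omega)) (dvd3 b kb hkb (by omega)))
    have hc3 : kc = 0 := by
      by_contra h'
      exact h3 (hac.isUnit_of_dvd' (dvd3 a ka hka (by omega)) (dvd3 c kc hkc (by omega)))
    have hb1 := habs b (by simp [hkb, hb3])
    have hc1 := habs c (by simp [hkc, hc3])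
    have heq2 : a ^ p = -(2 * b + c) := by
      rw [hpowone b hb1, hpowone c hc1] at heq; linarith
    have h1 : (a ^ p).natAbs ≤ 3 := by
      rw [heq2]; rcases hb1 with rfl | rfl <;> rcases hc1 with rfl | rfl <;> norm_num
    rw [Int.natAbs_pow, hka, ← pow_mul] at h1
    have := hbig ka (by omega)
    omega
  have hkc0 : kc = 0 := by
    by_contra h
    have hb3 : kb = 0 := by
      by_contra h'
      exact h3 (hbc.isUnit_of_dvd' (dvd3 b kb hkb (by omega)) (dvd3 c kc hkc (by omega)))
    have ha1 := habs a (by simp [hka, hka0])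
    have hb1 := habs b (by simp [hkb, hb3])
    have heq2 : c ^ p = -(a + 2 * b) := by
      rw [hpowone a ha1, hpowone b hb1] at heq; linarith
    have h1 : (c ^ p).natAbs ≤ 3 := by
      rw [heq2]; rcases ha1 with rfl | rfl <;> rcases hb1 with rfl | rfl <;> norm_num
    rw [Int.natAbs_pow, hkc, ← pow_mul] at h1
    have := hbig kc (by omega)
    omega
  have hkb0 : kb = 0 := by
    by_contra h
    have ha1 := habs a (by simp [hka, hka0])
    have hc1 := habs c (by simp [hkc, hkc0])
    have heq2 : 2 * b ^ p = -(a + c) := by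
      rw [hpowone a ha1, hpowone c hc1] at heq; linarith
    have h1 : (2 * b ^ p).natAbs ≤ 2 := by
      rw [heq2]; rcases ha1 with rfl | rfl <;> rcases hc1 with rfl | rfl <;> norm_num
    rw [Int.natAbs_mul, Int.natAbs_pow, hkb, ← pow_mul, (by norm_num : (2:ℤ).natAbs = 2)] at h1
    have := hbig kb (by omega)
    omega
  have ha1 := habs a (by simp [hka, hka0])
  have hb1 := habs b (by simp [hkb, hkb0])
  have hc1 := habs c (by simp [hkc, hkc0])
  rw [hpowone a ha1, hpowone b hb1, hpowone c hc1] at heq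
  constructor
  · left
    refine ⟨?_, ?_, 0, ?_⟩ <;>
      simp [abs_eq (by norm_num : (0:ℤ) ≤ 1)] <;> tauto
  · rcases ha1 with rfl | rfl <;> rcases hb1 with rfl | rfl <;> rcases hc1 with rfl | rfl <;>
      simp_all
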